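/- Let p be a prime with 2^(n-1) ≤ p < 2^n, and let x be an integer with 1 ≤ x < p. Run the Extended Euclidean Algorithm on (p, x) with termination index k and set b_i = ⌊log₂ q_i⌋. Fix an iteration index j with 1 ≤ j ≤ k−1 and a within-iteration position u with 0 < u ≤ 4(b_j + 1), and let the global step index be T = 4·Σ_{i=1}^{j-1}(b_i + 1) + u. Let ℓ_t = ⌊log₂ t_j⌋ + 1, and let ℓ_q = 0 if u ≤ b_j + 1 or u > 3(b_j + 1), ℓ_q = u − (b_j + 1) if b_j + 1 < u ≤ 2(b_j + 1), and ℓ_q = 3(b_j + 1) − u if 2(b_j + 1) < u ≤ 3(b_j + 1). Then ℓ_t + ℓ_q + 1 ≤ ⌊T/2⌋ + 2 and ℓ_t + ℓ_q + 1 ≤ n + 2. -/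
import Mathlib


/-- Remainder sequence of the Extended Euclidean Algorithm on `(p, x)`:
`r 0 = p`, `r 1 = x`, and `r (i+1) = r (i-1) - ⌊r (i-1) / r i⌋ * r i` for `i ≥ 1`. -/
def eeaR (p x : ℕ) : ℕ → ℕ
  | 0 => p
  | 1 => x
  | (i + 2) => eeaR p x i - (eeaR p x i / eeaR p x (i + 1)) * eeaR p x (i + 1)

/-- Quotient sequence `q i = ⌊r (i-1) / r i⌋` of the Extended Euclidean Algorithm. -/
def eeaQ (p x i : ℕ) : ℕ := eeaR p x (i - 1) / eeaR p x i

/-- Cofactor sequence of the Extended Euclidean Algorithm: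
`t 0 = 0`, `t 1 = 1`, and `t (i+1) = t (i-1) + q i * t i` for `i ≥ 1`. -/
def eeaT (p x : ℕ) : ℕ → ℕ
  | 0 => 0
  | 1 => 1
  | (i + 2) => eeaT p x i + eeaQ p x (i + 1) * eeaT p x (i + 1)

lemma eeaR_mod' (p x i : ℕ) : eeaR p x (i+2) = eeaR p x i % eeaR p x (i+1) := by
  show eeaR p x i - (eeaR p x i / eeaR p x (i + 1)) * eeaR p x (i + 1) = _
  have h2 : eeaR p x i / eeaR p x (i+1) * eeaR p x (i+1) + eeaR p x i % eeaR p x (i+1)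
      = eeaR p x i := by rw [Nat.mul_comm]; exact Nat.div_add_mod _ _
  omega

lemma eeaInv' (p x : ℕ) : ∀ i, eeaT p x (i+1) * eeaR p x i + eeaT p x i * eeaR p x (i+1) = p := by
  intro i
  induction i with
  | zero => simp [eeaT, eeaR]
  | succ m ih =>
    have hd : eeaR p x (m+1) * (eeaR p x m / eeaR p x (m+1)) + eeaR p x m % eeaR p x (m+1)
        = eeaR p x m := Nat.div_add_mod _ _
    rw [eeaR_mod']
    show (eeaT p x m + eeaQ p x (m+1) * eeaT p x (m+1)) * eeaR p x (m+1)
        + eeaT p x (m+1) * (eeaR p x m % eeaR p x (m+1)) = p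
    have hq : eeaQ p x (m+1) = eeaR p x m / eeaR p x (m+1) := rfl
    rw [hq]
    nlinarith [ih, hd]

/-- With `b_j = ⌊log₂ q_j⌋`, step `T = 4·Σ_{i<j}(b_i+1) + u`
(`0 < u ≤ 4(b_j+1)`), `ℓ_t = ⌊log₂ t_j⌋ + 1` and the piecewise stored quotient
length `ℓ_q`, one has `ℓ_t + ℓ_q + 1 ≤ ⌊T/2⌋ + 2` and `ℓ_t + ℓ_q + 1 ≤ n + 2`. -/
theorem stmt_12 (n p x : ℕ) (hp : p.Prime)
    (hplb : 2 ^ (n - 1) ≤ p) (hpub : p < 2 ^ n)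
    (hx : 1 ≤ x) (hxp : x < p)
    (k : ℕ) (hk : eeaR p x k = 0) (hkmin : ∀ m < k, eeaR p x m ≠ 0)
    (j u : ℕ) (hj1 : 1 ≤ j) (hjk : j ≤ k - 1)
    (hu1 : 0 < u) (hu2 : u ≤ 4 * (Nat.log 2 (eeaQ p x j) + 1))
    (T : ℕ) (hT : T = 4 * ∑ i ∈ Finset.Icc 1 (j - 1), (Nat.log 2 (eeaQ p x i) + 1) + u)
    (ℓt : ℕ) (hlt : ℓt = Nat.log 2 (eeaT p x j) + 1)
    (ℓq : ℕ)
    (hlq : ℓq =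
      if u ≤ Nat.log 2 (eeaQ p x j) + 1 ∨ 3 * (Nat.log 2 (eeaQ p x j) + 1) < u then 0
      else if u ≤ 2 * (Nat.log 2 (eeaQ p x j) + 1) then u - (Nat.log 2 (eeaQ p x j) + 1)
      else 3 * (Nat.log 2 (eeaQ p x j) + 1) - u) :
    ℓt + ℓq + 1 ≤ T / 2 + 2 ∧ ℓt + ℓq + 1 ≤ n + 2 := by
  have hk2 : 2 ≤ k := by omega
  have hrpos : ∀ m, m < k → 0 < eeaR p x m := fun m hm => Nat.pos_of_ne_zero (hkmin m hm)
  -- remainders strictly decrease while positive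
  have hrdec : ∀ i, i + 1 < k → eeaR p x (i+1) < eeaR p x i := by
    intro i hi
    match i with
    | 0 => exact hxp
    | m+1 =>
      rw [eeaR_mod']
      exact Nat.mod_lt _ (hrpos (m+1) (by omega))
  -- quotients are ≥ 1 for 1 ≤ i < k
  have hq1 : ∀ i, 1 ≤ i → i < k → 1 ≤ eeaQ p x i := by
    intro i h1 h2
    obtain ⟨m, rfl⟩ : ∃ m, i = m + 1 := ⟨i - 1, by omega⟩
    have : eeaR p x (m+1) ≤ eeaR p x m := le_of_lt (hrdec m h2)
    exact (Nat.one_le_div_iff (hrpos (m+1) h2)).mpr this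
  -- t is positive and monotone
  have ht : ∀ i, i ≤ k - 1 → 1 ≤ eeaT p x (i+1) ∧ eeaT p x i ≤ eeaT p x (i+1) := by
    intro i
    induction i with
    | zero => intro _; simp [eeaT]
    | succ m ih =>
      intro hm
      obtain ⟨h1, _⟩ := ih (by omega)
      have hq := hq1 (m+1) (by omega) (by omega)
      have hle : eeaT p x (m+1) ≤ eeaQ p x (m+1) * eeaT p x (m+1) :=
        Nat.le_mul_of_pos_left _ hq
      constructor
      · show 1 ≤ eeaT p x m + eeaQ p x (m+1) * eeaT p x (m+1)
        omega
      · show eeaT p x (m+1) ≤ eeaT p x m + eeaQ p x (m+1) * eeaT p x (m+1)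
        omega
  -- t bounded by product of quotient sizes
  have htle : ∀ m, m ≤ k - 1 →
      eeaT p x (m+1) ≤ 2 ^ (∑ i ∈ Finset.Icc 1 m, (Nat.log 2 (eeaQ p x i) + 1)) := by
    intro m
    induction m with
    | zero => intro _; simp [eeaT]
    | succ m ih =>
      intro hm
      have ihm := ih (by omega)
      have hmono := (ht m (by omega)).2
      have hqlt : eeaQ p x (m+1) < 2 ^ (Nat.log 2 (eeaQ p x (m+1)) + 1) :=
        Nat.lt_pow_succ_log_self (by norm_num) _
      have hstep : eeaT p x (m+2) ≤ 2 ^ (Nat.log 2 (eeaQ p x (m+1)) + 1) * eeaT p x (m+1) := by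
        show eeaT p x m + eeaQ p x (m+1) * eeaT p x (m+1) ≤ _
        have h1 : eeaT p x m + eeaQ p x (m+1) * eeaT p x (m+1) ≤
            (eeaQ p x (m+1) + 1) * eeaT p x (m+1) := by
          rw [Nat.add_mul, Nat.one_mul]; omega
        refine h1.trans (Nat.mul_le_mul_right _ (by omega))
      rw [Finset.sum_Icc_succ_top (by omega : 1 ≤ m + 1), pow_add]
      calc eeaT p x (m+2) ≤ 2 ^ (Nat.log 2 (eeaQ p x (m+1)) + 1) * eeaT p x (m+1) := hstep
        _ ≤ 2 ^ (Nat.log 2 (eeaQ p x (m+1)) + 1) *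
            2 ^ (∑ i ∈ Finset.Icc 1 m, (Nat.log 2 (eeaQ p x i) + 1)) :=
          Nat.mul_le_mul_left _ ihm
        _ = _ := by ring
  obtain ⟨jm, rfl⟩ : ∃ m, j = m + 1 := ⟨j - 1, by omega⟩
  -- q_j * t_j ≤ t_{j+1} ≤ p
  have htp : eeaT p x (jm+2) ≤ p := by
    have hinv := eeaInv' p x (jm+1)
    have hr : 1 ≤ eeaR p x (jm+1) := hrpos (jm+1) (by omega)
    nlinarith [hinv, hr]
  have hqt : eeaQ p x (jm+1) * eeaT p x (jm+1) ≤ eeaT p x (jm+2) := by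
    show _ ≤ eeaT p x jm + eeaQ p x (jm+1) * eeaT p x (jm+1)
    omega
  have hqpos : 1 ≤ eeaQ p x (jm+1) := hq1 (jm+1) (by omega) (by omega)
  have htpos : 1 ≤ eeaT p x (jm+1) := (ht jm (by omega)).1
  -- log q_j + log t_j < n
  have hlogsum : Nat.log 2 (eeaQ p x (jm+1)) + Nat.log 2 (eeaT p x (jm+1)) < n := by
    have hqtpos : 0 < eeaQ p x (jm+1) * eeaT p x (jm+1) := Nat.mul_pos hqpos htpos
    have h1 : 2 ^ (Nat.log 2 (eeaQ p x (jm+1)) + Nat.log 2 (eeaT p x (jm+1))) ≤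
        eeaQ p x (jm+1) * eeaT p x (jm+1) := by
      rw [pow_add]
      exact Nat.mul_le_mul (Nat.pow_log_le_self 2 (by omega)) (Nat.pow_log_le_self 2 (by omega))
    have h2 : eeaQ p x (jm+1) * eeaT p x (jm+1) < 2 ^ n := by
      calc _ ≤ eeaT p x (jm+2) := hqt
        _ ≤ p := htp
        _ < 2 ^ n := hpub
    have := h1.trans_lt h2
    exact (Nat.pow_lt_pow_iff_right (by norm_num)).mp this
  -- log t_j ≤ S
  have hltS : Nat.log 2 (eeaT p x (jm+1)) ≤
      ∑ i ∈ Finset.Icc 1 jm, (Nat.log 2 (eeaQ p x i) + 1) := by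
    have := Nat.log_mono_right (b := 2) (htle jm (by omega))
    rwa [Nat.log_pow (by norm_num)] at this
  simp only [Nat.add_sub_cancel] at hT
  set S := ∑ i ∈ Finset.Icc 1 jm, (Nat.log 2 (eeaQ p x i) + 1) with hS
  set b := Nat.log 2 (eeaQ p x (jm+1)) with hb
  set lt := Nat.log 2 (eeaT p x (jm+1)) with hlt2
  split_ifs at hlq <;> omega
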